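/- For any fixed r ∈ ℤ/N with r ≠ 0 and 2r ≠ 0, the sum over x ∈ (ℤ/N)^k of η_r^x · η_{−r}^x equals (2^k − 1)(2^k − 2) N^{k−2}. -/

import Mathlib

open Finset

/-- The subset sum `b · x = ∑ j, b j * x j` over `ℤ/N`. -/
def dotP {N k : ℕ} (b : Fin k → Bool) (x : Fin k → ZMod N) : ZMod N :=
  ∑ j, if b j then x j else 0

/-- `η_r^x`: the number of bit strings `b ∈ {0,1}^k` with `b · x ≡ r (mod N)`. -/
def etaN {N k : ℕ} (r : ZMod N) (x : Fin k → ZMod N) : ℕ :=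
  (Finset.univ.filter fun b : Fin k → Bool => dotP b x = r).card

/-- `dotP b` as an additive monoid hom. -/
def dotHom {N k : ℕ} (b : Fin k → Bool) : (Fin k → ZMod N) →+ ZMod N where
  toFun x := dotP b x
  map_zero' := by simp [dotP]
  map_add' x y := by
    simp only [dotP, Pi.add_apply, ← Finset.sum_add_distrib]
    refine Finset.sum_congr rfl fun l _ => ?_
    by_cases h : b l <;> simp [h]

/-- The pair map `x ↦ (b·x, c·x)` as an additive monoid hom. -/
def pairHom {N k : ℕ} (b c : Fin k → Bool) : (Fin k → ZMod N) →+ ZMod N × ZMod N :=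
  (dotHom b).prod (dotHom c)

@[simp] lemma pairHom_apply {N k : ℕ} (b c : Fin k → Bool) (x : Fin k → ZMod N) :
    pairHom b c x = (dotP b x, dotP c x) := rfl

lemma card_fiber_eq {G H : Type*} [AddCommGroup G] [AddCommGroup H] [Fintype G] [Fintype H]
    [DecidableEq H] (f : G →+ H) (hf : Function.Surjective f) (y : H) :
    (Finset.univ.filter fun x => f x = y).card * Fintype.card H = Fintype.card G := by
  have hfib : ∀ y₁ y₂ : H,
      (univ.filter fun x => f x = y₁).card = (univ.filter fun x => f x = y₂).card := by
    intro y₁ y₂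
    obtain ⟨d, hd⟩ := hf (y₂ - y₁)
    refine Finset.card_nbij' (fun x => x + d) (fun x => x - d) ?_ ?_ ?_ ?_
    · intro x hx; simp only [mem_coe, mem_filter, mem_univ, true_and] at hx ⊢
      rw [map_add, hx, hd]; abel
    · intro x hx; simp only [mem_coe, mem_filter, mem_univ, true_and] at hx ⊢
      rw [map_sub, hx, hd]; abel
    · intro x _; simp
    · intro x _; simp
  have h1 : Fintype.card G = ∑ z : H, (univ.filter fun x => f x = z).card :=
    Finset.card_eq_sum_card_fiberwise (fun x _ => mem_univ (f x))
  rw [h1, Finset.sum_congr rfl fun z _ => hfib z y, Finset.sum_const, smul_eq_mul,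
    mul_comm, Fintype.card]

lemma pairHom_surjective {N k : ℕ} [NeZero N] (b c : Fin k → Bool) (i j : Fin k)
    (hij : i ≠ j) (hbj : b j = true) (hcj : c j = false) (hci : c i = true) :
    Function.Surjective (pairHom (N := N) b c) := by
  rintro ⟨u, v⟩
  refine ⟨fun l => if l = i then v else if l = j then u - (if b i then v else 0) else 0, ?_⟩
  have hkey : ∀ (d : Fin k → Bool) (f : Fin k → ZMod N),
      (∀ l, l ≠ i → l ≠ j → f l = 0) → ∑ l, f l = f i + f j := by
    intro d f hf
    rw [← Finset.sum_pair hij]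
    exact (Finset.sum_subset (Finset.subset_univ {i, j}) (by
      intro l _ hl
      simp only [mem_insert, mem_singleton, not_or] at hl
      exact hf l hl.1 hl.2)).symm
  show (dotP b _, dotP c _) = (u, v)
  rw [Prod.mk.injEq]
  constructor
  · show dotP b _ = u
    rw [dotP, hkey b _ (fun l hl1 hl2 => by simp [hl1, hl2, ite_self])]
    simp [hij.symm, hbj, if_neg hij.symm]
  · show dotP c _ = v
    rw [dotP, hkey c _ (fun l hl1 hl2 => by simp [hl1, hl2, ite_self])]
    simp [hci, hcj, if_neg hij.symm]

lemma card_pair_fiber {N k : ℕ} [NeZero N] (hk : 2 ≤ k) (b c : Fin k → Bool)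
    (i j : Fin k) (hij : i ≠ j) (hbj : b j = true) (hcj : c j = false) (hci : c i = true)
    (u v : ZMod N) :
    (univ.filter fun x : Fin k → ZMod N => dotP b x = u ∧ dotP c x = v).card = N ^ (k - 2) := by
  have hs := pairHom_surjective (N := N) b c i j hij hbj hcj hci
  have h := card_fiber_eq (pairHom (N := N) b c) hs (u, v)
  have hfilter : (univ.filter fun x : Fin k → ZMod N => pairHom (N := N) b c x = (u, v))
      = (univ.filter fun x : Fin k → ZMod N => dotP b x = u ∧ dotP c x = v) := by
    exact Finset.filter_congr fun x _ => by rw [pairHom_apply, Prod.mk.injEq]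
  rw [hfilter] at h
  have hcardH : Fintype.card (ZMod N × ZMod N) = N ^ 2 := by
    rw [Fintype.card_prod, ZMod.card]; ring
  have hcardG : Fintype.card (Fin k → ZMod N) = N ^ k := by
    rw [Fintype.card_fun, ZMod.card, Fintype.card_fin]
  rw [hcardH, hcardG] at h
  have hNk : N ^ k = N ^ (k - 2) * N ^ 2 := by
    rw [← pow_add, Nat.sub_add_cancel hk]
  rw [hNk] at h
  exact Nat.eq_of_mul_eq_mul_right (Nat.pow_pos (Nat.pos_of_ne_zero (NeZero.ne N))) h

/-- For `r ≠ 0` with `2r ≠ 0`, `∑_x η_r^x η_{-r}^x = (2^k-1)(2^k-2) N^(k-2)`. -/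
theorem sum_eta_mul_eta_neg {N k : ℕ} [NeZero N] (hN : 3 ≤ N) (hk : 2 ≤ k)
    (r : ZMod N) (hr : r ≠ 0) (hr2 : 2 * r ≠ 0) :
    ∑ x : Fin k → ZMod N, etaN r x * etaN (-r) x = (2 ^ k - 1) * (2 ^ k - 2) * N ^ (k - 2) := by
  classical
  set z : Fin k → Bool := fun _ => false with hz
  have step1 : ∑ x : Fin k → ZMod N, etaN r x * etaN (-r) x
      = ∑ b : Fin k → Bool, ∑ c : Fin k → Bool,
          (univ.filter fun x : Fin k → ZMod N => dotP b x = r ∧ dotP c x = -r).card := by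
    have : ∀ x : Fin k → ZMod N, etaN r x * etaN (-r) x
        = ∑ b : Fin k → Bool, ∑ c : Fin k → Bool,
            (if dotP b x = r ∧ dotP c x = -r then 1 else 0) := by
      intro x
      rw [etaN, etaN, Finset.card_filter, Finset.card_filter, Finset.sum_mul_sum]
      refine Finset.sum_congr rfl fun b _ => Finset.sum_congr rfl fun c _ => ?_
      by_cases h1 : dotP b x = r <;> by_cases h2 : dotP c x = -r <;> simp [h1, h2]
    rw [Finset.sum_congr rfl fun x _ => this x, Finset.sum_comm]
    refine Finset.sum_congr rfl fun b _ => ?_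
    rw [Finset.sum_comm]
    refine Finset.sum_congr rfl fun c _ => ?_
    rw [Finset.card_filter]
  have key : ∀ b c : Fin k → Bool,
      (univ.filter fun x : Fin k → ZMod N => dotP b x = r ∧ dotP c x = -r).card
      = if b ≠ z ∧ c ≠ z ∧ b ≠ c then N ^ (k - 2) else 0 := by
    intro b c
    by_cases hb : b = z
    · have : ∀ x : Fin k → ZMod N, ¬ (dotP b x = r ∧ dotP c x = -r) := by
        intro x hx
        exact hr (by rw [← hx.1, hb]; simp [dotP, hz])
      rw [Finset.filter_false_of_mem (fun x _ => this x), Finset.card_empty,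
        if_neg (fun h => h.1 hb)]
    by_cases hc : c = z
    · have : ∀ x : Fin k → ZMod N, ¬ (dotP b x = r ∧ dotP c x = -r) := by
        intro x hx
        apply hr
        have : (0 : ZMod N) = -r := by rw [← hx.2, hc]; simp [dotP, hz]
        rw [← neg_neg r, ← this, neg_zero]
      rw [Finset.filter_false_of_mem (fun x _ => this x), Finset.card_empty,
        if_neg (fun h => h.2.1 hc)]
    by_cases hbc : b = c
    · have : ∀ x : Fin k → ZMod N, ¬ (dotP b x = r ∧ dotP c x = -r) := by
        intro x hx
        apply hr2
        have h1 : r = -r := hx.1.symm.trans (by rw [hbc]; exact hx.2)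
        have h2 : 2 * r = r + -r := by rw [two_mul]; exact congrArg (fun t => r + t) h1
        rw [h2, add_neg_cancel]
      rw [Finset.filter_false_of_mem (fun x _ => this x), Finset.card_empty,
        if_neg (fun h => h.2.2 hbc)]
    · rw [if_pos ⟨hb, hc, hbc⟩]
      have hbcj : ∃ j, b j ≠ c j := by
        by_contra h
        push_neg at h
        exact hbc (funext h)
      obtain ⟨j, hj⟩ := hbcj
      rcases Bool.eq_false_or_eq_true (b j) with hbj | hbj
      · -- b j = true, c j = false
        have hcj : c j = false := by
          cases hcjv : c j
          · rfl
          · exact absurd (hbj.trans hcjv.symm) hj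
        have hci : ∃ i, c i = true := by
          by_contra h
          push_neg at h
          exact hc (funext fun l => by simpa using (h l))
        obtain ⟨i, hi⟩ := hci
        have hij : i ≠ j := fun h => by rw [h, hcj] at hi; exact Bool.false_ne_true hi
        exact card_pair_fiber hk b c i j hij hbj hcj hi r (-r)
      · -- b j = false, c j = true; swap roles
        have hcj : c j = true := by
          cases hcjv : c j
          · exact absurd (hbj.trans hcjv.symm) hj
          · rfl
        have hbi : ∃ i, b i = true := by
          by_contra h
          push_neg at h
          exact hb (funext fun l => by simpa using (h l))
        obtain ⟨i, hi⟩ := hbi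
        have hij : i ≠ j := fun h => by rw [h, hbj] at hi; exact Bool.false_ne_true hi
        have := card_pair_fiber hk c b i j hij hcj hbj hi (-r) r
        rw [← this]
        apply Finset.card_nbij' id id <;> intro x hx <;>
          simp only [mem_coe, mem_filter, mem_univ, true_and, id] at hx ⊢ <;> tauto
  rw [step1]
  rw [Finset.sum_congr rfl fun b _ => Finset.sum_congr rfl fun c _ => key b c]
  have cardBool : Fintype.card (Fin k → Bool) = 2 ^ k := by
    rw [Fintype.card_fun, Fintype.card_fin, Fintype.card_bool]
  have inner : ∀ b : Fin k → Bool, b ≠ z →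
      (∑ c : Fin k → Bool, if b ≠ z ∧ c ≠ z ∧ b ≠ c then N ^ (k - 2) else 0)
      = (2 ^ k - 2) * N ^ (k - 2) := by
    intro b hb
    have : ∀ c : Fin k → Bool, (if b ≠ z ∧ c ≠ z ∧ b ≠ c then N ^ (k - 2) else 0)
        = if c ∈ univ \ {z, b} then N ^ (k - 2) else 0 := by
      intro c
      by_cases h1 : c = z <;> by_cases h2 : c = b <;>
        simp [h1, h2, hb, Finset.mem_sdiff, Finset.mem_insert, Finset.mem_singleton, Ne,
          eq_comm (a := b)] <;> tauto
    rw [Finset.sum_congr rfl fun c _ => this c, Finset.sum_ite_mem, Finset.univ_inter,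
      Finset.sum_const, smul_eq_mul]
    congr 1
    rw [Finset.card_sdiff_of_subset (Finset.subset_univ _), Finset.card_insert_of_notMem
      (by simpa using Ne.symm hb), Finset.card_singleton, ← cardBool, Fintype.card]
  have outer : (∑ b : Fin k → Bool, ∑ c : Fin k → Bool,
      if b ≠ z ∧ c ≠ z ∧ b ≠ c then N ^ (k - 2) else 0)
      = (2 ^ k - 1) * ((2 ^ k - 2) * N ^ (k - 2)) := by
    have : ∀ b : Fin k → Bool, (∑ c : Fin k → Bool,
        if b ≠ z ∧ c ≠ z ∧ b ≠ c then N ^ (k - 2) else 0)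
        = if b ∈ univ \ {z} then (2 ^ k - 2) * N ^ (k - 2) else 0 := by
      intro b
      by_cases hb : b = z
      · simp [hb]
      · rw [inner b hb, if_pos (by simp [hb])]
    rw [Finset.sum_congr rfl fun b _ => this b, Finset.sum_ite_mem, Finset.univ_inter,
      Finset.sum_const, smul_eq_mul]
    congr 1
    rw [Finset.card_sdiff_of_subset (Finset.subset_univ _), Finset.card_singleton, ← cardBool,
      Fintype.card]
  rw [outer, mul_assoc]
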